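/- Let ζ be a primitive 5th root of unity and T = diag(ζ, ζ², ζ³, ζ⁴) acting on Sym^n(C^4). Then the trace of T⁻¹ on Sym^n(C^4) equals 1 if n ≡ 0 mod 5, equals -1 if n ≡ 1 mod 5, and equals 0 otherwise. -/

import Mathlib

open Finset Complex

/-- The trace on `Sym^n(ℂ^4)` of a diagonal matrix with eigenvalues `d 0, d 1, d 2, d 3`:
the sum over all monomials of degree `n` in the basis vectors of the product of the
corresponding eigenvalues. -/
noncomputable def symTrace (d : Fin 4 → ℂ) (n : ℕ) : ℂ :=
  ∑ x ∈ Finset.Nat.antidiagonalTuple 4 n, ∏ i, d i ^ x i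
/-- Splitting a sum over `antidiagonalTuple (k+1) n` by the first coordinate. -/
lemma sum_antidiagonalTuple_cons (k n : ℕ) (g : (Fin (k + 1) → ℕ) → ℂ) :
    ∑ x ∈ Finset.Nat.antidiagonalTuple (k + 1) n, g x
      = ∑ p ∈ Finset.HasAntidiagonal.antidiagonal n,
          ∑ y ∈ Finset.Nat.antidiagonalTuple k p.2, g (Fin.cons p.1 y) := by
  rw [Finset.sum_sigma']
  refine Finset.sum_nbij' (fun x => ⟨(x 0, ∑ i, Fin.tail x i), Fin.tail x⟩)
    (fun q => Fin.cons q.1.1 q.2) ?_ ?_ ?_ ?_ ?_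
  · intro x hx
    rw [Finset.Nat.mem_antidiagonalTuple] at hx
    simp only [Finset.mem_sigma, Finset.HasAntidiagonal.mem_antidiagonal, Finset.Nat.mem_antidiagonalTuple]
    exact ⟨by rw [← hx, Fin.sum_univ_succ]; rfl, trivial⟩
  · intro q hq
    simp only [Finset.mem_sigma, Finset.HasAntidiagonal.mem_antidiagonal,
      Finset.Nat.mem_antidiagonalTuple] at hq ⊢
    rw [Fin.sum_cons, hq.2, hq.1]
  · intro x _
    simp [Fin.cons_self_tail]
  · intro q hq
    simp only [Finset.mem_sigma, Finset.HasAntidiagonal.mem_antidiagonal,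
      Finset.Nat.mem_antidiagonalTuple] at hq
    ext
    · simp [Fin.cons_zero]
    · simp only; rw [Fin.tail_cons, hq.2]
    · simp [Fin.tail_cons]
  · intro x _
    simp [Fin.cons_self_tail]

lemma sum_antidiagonalTuple_one' (c : ℂ) (n : ℕ) :
    ∑ x ∈ Finset.Nat.antidiagonalTuple 1 n, ∏ i, (![c] : Fin 1 → ℂ) i ^ x i = c ^ n := by
  rw [Finset.Nat.antidiagonalTuple_one, Finset.sum_singleton]
  simp

lemma step (k : ℕ) (c : ℂ) (d : Fin k → ℂ) (n : ℕ) :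
    ∑ x ∈ Finset.Nat.antidiagonalTuple (k + 1) n, ∏ i, (Fin.cons c d : Fin (k+1) → ℂ) i ^ x i
      = ∑ p ∈ Finset.HasAntidiagonal.antidiagonal n,
          c ^ p.1 * ∑ y ∈ Finset.Nat.antidiagonalTuple k p.2, ∏ i, d i ^ y i := by
  rw [sum_antidiagonalTuple_cons]
  refine Finset.sum_congr rfl fun p _ => ?_
  rw [Finset.mul_sum]
  refine Finset.sum_congr rfl fun y _ => ?_
  rw [Fin.prod_univ_succ]
  simp

noncomputable def zA (z : ℂ) (n : ℕ) : ℂ :=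
  ∑ p ∈ Finset.HasAntidiagonal.antidiagonal n, (z ^ 2) ^ p.1 * z ^ p.2

noncomputable def zB (z : ℂ) (n : ℕ) : ℂ :=
  ∑ p ∈ Finset.HasAntidiagonal.antidiagonal n, (z ^ 3) ^ p.1 * zA z p.2

noncomputable def zC (z : ℂ) (n : ℕ) : ℂ :=
  ∑ p ∈ Finset.HasAntidiagonal.antidiagonal n, (z ^ 4) ^ p.1 * zB z p.2

lemma zA_zero (z : ℂ) : zA z 0 = 1 := by simp [zA]
lemma zB_zero (z : ℂ) : zB z 0 = 1 := by simp [zB, zA_zero]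
lemma zC_zero (z : ℂ) : zC z 0 = 1 := by simp [zC, zB_zero]

lemma zA_succ (z : ℂ) (n : ℕ) : zA z (n + 1) = z ^ (n + 1) + z ^ 2 * zA z n := by
  rw [zA, Finset.Nat.sum_antidiagonal_succ]
  simp only [pow_zero, one_mul, pow_succ]
  rw [zA, Finset.mul_sum]
  congr 1
  exact Finset.sum_congr rfl fun p _ => by ring

lemma zB_succ (z : ℂ) (n : ℕ) : zB z (n + 1) = zA z (n + 1) + z ^ 3 * zB z n := by
  rw [zB, Finset.Nat.sum_antidiagonal_succ]
  simp only [pow_zero, one_mul, pow_succ]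
  rw [zB, Finset.mul_sum]
  congr 1
  exact Finset.sum_congr rfl fun p _ => by ring

lemma zC_succ (z : ℂ) (n : ℕ) : zC z (n + 1) = zB z (n + 1) + z ^ 4 * zC z n := by
  rw [zC, Finset.Nat.sum_antidiagonal_succ]
  simp only [pow_zero, one_mul, pow_succ]
  rw [zC, Finset.mul_sum]
  congr 1
  exact Finset.sum_congr rfl fun p _ => by ring

lemma symTrace_eq_zC (z : ℂ) (n : ℕ) :
    symTrace ![z ^ 4, z ^ 3, z ^ 2, z] n = zC z n := by
  have h4 : (![z ^ 4, z ^ 3, z ^ 2, z] : Fin 4 → ℂ)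
      = Fin.cons (z ^ 4) ![z ^ 3, z ^ 2, z] := rfl
  have h3 : (![z ^ 3, z ^ 2, z] : Fin 3 → ℂ) = Fin.cons (z ^ 3) ![z ^ 2, z] := rfl
  have h2 : (![z ^ 2, z] : Fin 2 → ℂ) = Fin.cons (z ^ 2) ![z] := rfl
  rw [symTrace, h4, step, zC]
  refine Finset.sum_congr rfl fun p _ => ?_
  congr 1
  rw [h3, step, zB]
  refine Finset.sum_congr rfl fun q _ => ?_
  congr 1
  rw [h2, step, zA]
  refine Finset.sum_congr rfl fun r _ => ?_
  congr 1
  exact sum_antidiagonalTuple_one' z r.2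

section values
variable {ζ : ℂ} (hζ : IsPrimitiveRoot ζ 5)

lemma zeta_pow5 (hζ : IsPrimitiveRoot ζ 5) : ζ ^ 5 = 1 := hζ.pow_eq_one

lemma zeta_sum (hζ : IsPrimitiveRoot ζ 5) : 1 + ζ + ζ ^ 2 + ζ ^ 3 + ζ ^ 4 = 0 := by
  have := hζ.geom_sum_eq_zero (by norm_num)
  simpa [Finset.sum_range_succ] using this

lemma zA_one (hζ : IsPrimitiveRoot ζ 5) : zA ζ 1 = ζ + ζ ^ 2 := by
  rw [zA_succ, zA_zero]; ring
lemma zA_two (hζ : IsPrimitiveRoot ζ 5) : zA ζ 2 = ζ ^ 2 + ζ ^ 3 + ζ ^ 4 := by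
  rw [zA_succ, zA_one hζ]; ring
lemma zA_three (hζ : IsPrimitiveRoot ζ 5) : zA ζ 3 = -ζ ^ 2 := by
  rw [zA_succ, zA_two hζ]
  linear_combination zeta_sum hζ + (1 + ζ) * zeta_pow5 hζ
lemma zA_four (hζ : IsPrimitiveRoot ζ 5) : zA ζ 4 = 0 := by
  rw [zA_succ, zA_three hζ]; ring
lemma zA_five (hζ : IsPrimitiveRoot ζ 5) : zA ζ 5 = 1 := by
  rw [zA_succ, zA_four hζ]
  linear_combination zeta_pow5 hζ

lemma zB_one (hζ : IsPrimitiveRoot ζ 5) : zB ζ 1 = ζ + ζ ^ 2 + ζ ^ 3 := by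
  rw [zB_succ, zB_zero, zA_one hζ]; ring
lemma zB_two (hζ : IsPrimitiveRoot ζ 5) : zB ζ 2 = ζ ^ 4 := by
  rw [zB_succ, zB_one hζ, zA_two hζ]
  linear_combination zeta_sum hζ + (1 + ζ) * zeta_pow5 hζ
lemma zB_three (hζ : IsPrimitiveRoot ζ 5) : zB ζ 3 = 0 := by
  rw [zB_succ, zB_two hζ, zA_three hζ]
  linear_combination ζ ^ 2 * zeta_pow5 hζ
lemma zB_four (hζ : IsPrimitiveRoot ζ 5) : zB ζ 4 = 0 := by
  rw [zB_succ, zB_three hζ, zA_four hζ]; ring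
lemma zB_five (hζ : IsPrimitiveRoot ζ 5) : zB ζ 5 = 1 := by
  rw [zB_succ, zB_four hζ, zA_five hζ]; ring

lemma zC_one (hζ : IsPrimitiveRoot ζ 5) : zC ζ 1 = -1 := by
  rw [zC_succ, zC_zero, zB_one hζ]
  linear_combination zeta_sum hζ
lemma zC_two (hζ : IsPrimitiveRoot ζ 5) : zC ζ 2 = 0 := by
  rw [zC_succ, zC_one hζ, zB_two hζ]; ring
lemma zC_three (hζ : IsPrimitiveRoot ζ 5) : zC ζ 3 = 0 := by
  rw [zC_succ, zC_two hζ, zB_three hζ]; ring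
lemma zC_four (hζ : IsPrimitiveRoot ζ 5) : zC ζ 4 = 0 := by
  rw [zC_succ, zC_three hζ, zB_four hζ]; ring
lemma zC_five (hζ : IsPrimitiveRoot ζ 5) : zC ζ 5 = 1 := by
  rw [zC_succ, zC_four hζ, zB_five hζ]; ring

lemma zpow_shift (hζ : IsPrimitiveRoot ζ 5) (m : ℕ) : ζ ^ (m + 5) = ζ ^ m := by
  rw [pow_add, zeta_pow5 hζ, mul_one]

lemma zA_per (hζ : IsPrimitiveRoot ζ 5) : ∀ n, zA ζ (n + 5) = zA ζ n := by
  intro n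
  induction n with
  | zero => rw [zA_zero]; exact zA_five hζ
  | succ m ih =>
      have : m + 1 + 5 = (m + 5) + 1 := by omega
      rw [this, zA_succ, ih, zA_succ, zpow_shift hζ (m + 1)]

lemma zB_per (hζ : IsPrimitiveRoot ζ 5) : ∀ n, zB ζ (n + 5) = zB ζ n := by
  intro n
  induction n with
  | zero => rw [zB_zero]; exact zB_five hζ
  | succ m ih =>
      have : m + 1 + 5 = (m + 5) + 1 := by omega
      rw [this, zB_succ, ih, zB_succ, zA_per hζ (m + 1)]

lemma zC_per (hζ : IsPrimitiveRoot ζ 5) : ∀ n, zC ζ (n + 5) = zC ζ n := by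
  intro n
  induction n with
  | zero => rw [zC_zero]; exact zC_five hζ
  | succ m ih =>
      have : m + 1 + 5 = (m + 5) + 1 := by omega
      rw [this, zC_succ, ih, zC_succ, zB_per hζ (m + 1)]

lemma zC_mod (hζ : IsPrimitiveRoot ζ 5) (n : ℕ) : zC ζ n = zC ζ (n % 5) := by
  have : ∀ q r, zC ζ (5 * q + r) = zC ζ r := by
    intro q
    induction q with
    | zero => intro r; simp
    | succ m ih =>
        intro r
        have : 5 * (m + 1) + r = (5 * m + r) + 5 := by omega
        rw [this, zC_per hζ, ih]
  conv_lhs => rw [← Nat.div_add_mod n 5]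
  exact this (n / 5) (n % 5)

end values

/-- `ζ` a primitive 5th root of unity, `T = diag(ζ,ζ²,ζ³,ζ⁴)`: the trace of `T⁻¹`
on `Sym^n(ℂ^4)` is `1` if `n ≡ 0 mod 5`, `-1` if `n ≡ 1 mod 5`, and `0` otherwise. -/
theorem trace_inv_diag_zeta5 (ζ : ℂ) (hζ : IsPrimitiveRoot ζ 5) (n : ℕ) :
    symTrace ![ζ⁻¹, (ζ ^ 2)⁻¹, (ζ ^ 3)⁻¹, (ζ ^ 4)⁻¹] n =
      if n % 5 = 0 then 1 else if n % 5 = 1 then -1 else 0 := by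
  have h5 := zeta_pow5 hζ
  have e1 : ζ⁻¹ = ζ ^ 4 := inv_eq_of_mul_eq_one_left (by linear_combination h5)
  have e2 : (ζ ^ 2)⁻¹ = ζ ^ 3 := inv_eq_of_mul_eq_one_left (by linear_combination h5)
  have e3 : (ζ ^ 3)⁻¹ = ζ ^ 2 := inv_eq_of_mul_eq_one_left (by linear_combination h5)
  have e4 : (ζ ^ 4)⁻¹ = ζ := inv_eq_of_mul_eq_one_left (by linear_combination h5)
  rw [e1, e2, e3, e4, symTrace_eq_zC, zC_mod hζ]
  have hr : n % 5 = 0 ∨ n % 5 = 1 ∨ n % 5 = 2 ∨ n % 5 = 3 ∨ n % 5 = 4 := by omega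
  rcases hr with h | h | h | h | h <;> rw [h] <;>
    simp [zC_zero, zC_one hζ, zC_two hζ, zC_three hζ, zC_four hζ]
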